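/- Let S be a monoid, A = {0, 1, …, d} a finite alphabet regarded as a subset of ℝ with the discrete topology, and X ⊆ A^S a subshift, i.e. a closed subset of A^S invariant under the shift action (s·ω)(t) = ω(ts). Then the following are equivalent: (1) the dynamical system (S, X) is tame, i.e. for every continuous function f : X → ℝ the family {x ↦ f(s·x) : s ∈ S} contains no independent sequence; (2) for every infinite subset L ⊆ S there exists an infinite subset K ⊆ L such that the restriction image π_K(X) := {x|_K : x ∈ X} is a countable subset of A^K. -/

import Mathlib

/-- A sequence `(f n)` of real-valued functions on `Z` is *independent* if there are
reals `a < b` such that for all disjoint finite sets `P, M ⊆ ℕ` the set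
`⋂_{n ∈ P} {f n < a} ∩ ⋂_{n ∈ M} {f n > b}` is nonempty. -/
def IsIndependentSeq {Z : Type*} (f : ℕ → Z → ℝ) : Prop :=
  ∃ a b : ℝ, a < b ∧ ∀ P M : Finset ℕ, Disjoint P M →
    ((⋂ n ∈ P, {z | f n z < a}) ∩ ⋂ n ∈ M, {z | b < f n z}).Nonempty


namespace Stmt5Aux

open Set

variable {S : Type*} {β : Type*}

/-- projection of a set of functions to a coordinate set (shape matches the theorem). -/
def proj (M : Set S) (Z : Set (S → β)) : Set (↥M → β) :=
  (fun (ω : S → β) => fun k : ↥M => ω ↑k) '' Z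

lemma proj_subset_mono {M : Set S} {Z Z' : Set (S → β)} (h : Z ⊆ Z') :
    proj M Z ⊆ proj M Z' := Set.image_mono h

lemma proj_countable_mono {M' M : Set S} {Z : Set (S → β)} (h : M' ⊆ M)
    (hc : (proj M Z).Countable) : (proj M' Z).Countable := by
  have he : proj M' Z = (fun (y : ↥M → β) => fun u : ↥M' => y ⟨u.1, h u.2⟩) '' proj M Z := by
    unfold proj
    rw [← Set.image_comp]
    rfl
  rw [he]; exact hc.image _

lemma proj_union_countable {M₁ M₂ : Set S} {Z : Set (S → β)}
    (h₁ : (proj M₁ Z).Countable) (h₂ : (proj M₂ Z).Countable) :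
    (proj (M₁ ∪ M₂) Z).Countable := by
  classical
  set Ψ : (↥(M₁ ∪ M₂) → β) → (↥M₁ → β) × (↥M₂ → β) :=
    fun y => (fun u => y ⟨u.1, Or.inl u.2⟩, fun u => y ⟨u.1, Or.inr u.2⟩) with hΨ
  have hinj : Function.Injective Ψ := by
    intro y y' he
    funext u
    rcases u.2 with h | h
    · have := congrFun (congrArg Prod.fst he) ⟨u.1, h⟩
      simpa using this
    · have := congrFun (congrArg Prod.snd he) ⟨u.1, h⟩
      simpa using this
  have hsub : proj (M₁ ∪ M₂) Z ⊆ Ψ ⁻¹' ((proj M₁ Z) ×ˢ (proj M₂ Z)) := by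
    rintro y ⟨z, hz, rfl⟩
    exact ⟨⟨z, hz, rfl⟩, ⟨z, hz, rfl⟩⟩
  exact ((h₁.prod h₂).preimage hinj).mono hsub

lemma proj_countable_of_finite {M : Set S} (Z : Set (S → β)) (hM : M.Finite) [Finite β] :
    (proj M Z).Countable := by
  have : Finite ↥M := hM
  exact (Set.toFinite _).countable

/-- `Z` has uncountable projection on every infinite subset of `R`. -/
def BigOn (R : Set S) (Z : Set (S → β)) : Prop :=
  R.Infinite ∧ ∀ M, M ⊆ R → M.Infinite → ¬ (proj M Z).Countable

/-- hereditarily small. -/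
def HSOn (R : Set S) (Z : Set (S → β)) : Prop :=
  ∀ R', R' ⊆ R → R'.Infinite → ∃ M, M ⊆ R' ∧ M.Infinite ∧ (proj M Z).Countable

lemma BigOn.mono {R R' : Set S} {Z : Set (S → β)} (h : BigOn R Z) (hsub : R' ⊆ R)
    (hinf : R'.Infinite) : BigOn R' Z :=
  ⟨hinf, fun M hM => h.2 M (hM.trans hsub)⟩

lemma BigOn.of_subset {R : Set S} {Z Z' : Set (S → β)} (h : BigOn R Z) (hsub : Z ⊆ Z') :
    BigOn R Z' :=
  ⟨h.1, fun M hM hMinf hc => h.2 M hM hMinf (hc.mono (proj_subset_mono hsub))⟩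

lemma HSOn.mono {R R' : Set S} {Z : Set (S → β)} (h : HSOn R Z) (hsub : R' ⊆ R) :
    HSOn R' Z := fun R'' h'' => h R'' (h''.trans hsub)

lemma HSOn.of_subset {R : Set S} {Z Z' : Set (S → β)} (h : HSOn R Z) (hsub : Z' ⊆ Z) :
    HSOn R Z' := by
  intro R' hR' hR'inf
  obtain ⟨M, hM, hMinf, hc⟩ := h R' hR' hR'inf
  exact ⟨M, hM, hMinf, hc.mono (proj_subset_mono hsub)⟩

lemma BigOn.not_hs {R : Set S} {Z : Set (S → β)} (h : BigOn R Z) : ¬ HSOn R Z := by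
  intro hs
  obtain ⟨M, hM, hMinf, hc⟩ := hs R subset_rfl h.1
  exact h.2 M hM hMinf hc

lemma BigOn.nonempty {R : Set S} {Z : Set (S → β)} (h : BigOn R Z) : Z.Nonempty := by
  by_contra hne
  rw [Set.not_nonempty_iff_eq_empty] at hne
  refine h.2 R subset_rfl h.1 ?_
  simp [proj, hne]

lemma dichotomy {R : Set S} (Z : Set (S → β)) (hR : R.Infinite) :
    HSOn R Z ∨ ∃ R', R' ⊆ R ∧ R'.Infinite ∧ BigOn R' Z := by
  by_cases h : HSOn R Z
  · exact Or.inl h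
  · right
    unfold HSOn at h
    push_neg at h
    obtain ⟨R', hR'sub, hR'inf, hno⟩ := h
    exact ⟨R', hR'sub, hR'inf, hR'inf, fun M hM hMinf hc => hno M hM hMinf hc⟩

lemma refine_one {R : Set S} (Z : Set (S → β)) (hR : R.Infinite) :
    ∃ R', R' ⊆ R ∧ R'.Infinite ∧ (BigOn R' Z ∨ HSOn R' Z) := by
  rcases dichotomy Z hR with h | ⟨R', h1, h2, h3⟩
  · exact ⟨R, subset_rfl, hR, Or.inr h⟩
  · exact ⟨R', h1, h2, Or.inl h3⟩

lemma refine_list {R : Set S} (l : List (Set (S → β))) (hR : R.Infinite) :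
    ∃ R', R' ⊆ R ∧ R'.Infinite ∧ ∀ Z ∈ l, (BigOn R' Z ∨ HSOn R' Z) := by
  induction l generalizing R with
  | nil => exact ⟨R, subset_rfl, hR, by simp⟩
  | cons Z l ih =>
      obtain ⟨R₁, h1, h2, h3⟩ := ih hR
      obtain ⟨R₂, g1, g2, g3⟩ := refine_one Z h2
      refine ⟨R₂, g1.trans h1, g2, ?_⟩
      intro W hW
      rcases List.mem_cons.mp hW with rfl | hW
      · exact g3
      · rcases h3 W hW with h | h
        · exact Or.inl (h.mono g1 g2)
        · exact Or.inr (h.mono g1)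


lemma image_sep_eq {m : ℕ → S} {L : Set ℕ} {M : Set S} (hM : M ⊆ m '' L) :
    m '' {x ∈ L | m x ∈ M} = M := by
  apply Set.Subset.antisymm
  · rintro u ⟨x, ⟨_, hx2⟩, rfl⟩; exact hx2
  · intro u hu
    obtain ⟨x, hxL, rfl⟩ := hM hu
    exact ⟨x, ⟨hxL, hu⟩, rfl⟩

lemma infinite_of_image_infinite {m : ℕ → S} {L : Set ℕ} (h : (m '' L).Infinite) :
    L.Infinite := by
  intro hfin
  exact h (hfin.image m)

/-- Diagonal smallness: if along a sequence of coordinates the "bad side" is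
hereditarily small on suitable reservoirs, the set cannot be big. -/
lemma smallDiag (Z₀ : Set (S → Bool)) (T : Set S) (hbig : BigOn T Z₀)
    (m : ℕ → S) (hminj : Function.Injective m) (hmT : ∀ j, m j ∈ T)
    (T' : ℕ → Set S)
    (htail : ∀ r l, r < l → m l ∈ T' r)
    (b : Bool)
    (hHS : ∀ r, HSOn (T' r) {z ∈ Z₀ | z (m r) = b}) : False := by
  classical
  set C : ℕ → Set (S → Bool) := fun r => {z ∈ Z₀ | z (m r) = b} with hC
  -- state: (l, L) with L infinite, all elements > l, and countable credential for C l on m '' L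
  set Inv : ℕ × Set ℕ → Prop := fun p =>
    p.2.Infinite ∧ (∀ x ∈ p.2, p.1 < x) ∧ (proj (m '' p.2) (C p.1)).Countable with hInv
  -- generic step: from any l' and infinite index set L₀ of indices > something, get a state
  have mkstate : ∀ (l' : ℕ) (L₀ : Set ℕ), L₀.Infinite → (∀ x ∈ L₀, l' < x) →
      ∃ L', L' ⊆ L₀ ∧ Inv (l', L') := by
    intro l' L₀ hL₀inf hgt
    have hU : (m '' L₀).Infinite := hL₀inf.image (Set.injOn_of_injective hminj)
    have hUsub : m '' L₀ ⊆ T' l' := by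
      rintro u ⟨x, hx, rfl⟩; exact htail l' x (hgt x hx)
    obtain ⟨M, hM1, hM2, hM3⟩ := hHS l' (m '' L₀) hUsub hU
    refine ⟨{x ∈ L₀ | m x ∈ M}, fun x hx => hx.1, ?_, ?_, ?_⟩
    · apply infinite_of_image_infinite
      rw [image_sep_eq (hM1)]
      exact hM2
    · intro x hx; exact hgt x hx.1
    · rw [image_sep_eq (hM1)]
      exact hM3
  have hstep : ∀ p : ℕ × Set ℕ, Inv p → ∃ q : ℕ × Set ℕ,
      Inv q ∧ q.1 ∈ p.2 ∧ q.2 ⊆ p.2 := by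
    rintro ⟨l, L⟩ ⟨hLinf, hgt, _⟩
    obtain ⟨l', hl'⟩ := hLinf.nonempty
    have hsub : {x ∈ L | l' < x} ⊆ L := fun x hx => hx.1
    have hinf : {x ∈ L | l' < x}.Infinite := by
      have : L \ {x | x ≤ l'} ⊆ {x ∈ L | l' < x} := by
        intro x hx; exact ⟨hx.1, by simpa using hx.2⟩
      exact (hLinf.diff (Set.finite_le_nat l')).mono this
    obtain ⟨L', hL'sub, hL'inv⟩ := mkstate l' {x ∈ L | l' < x} hinf (fun x hx => hx.2)
    exact ⟨(l', L'), hL'inv, hl', hL'sub.trans hsub⟩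
  -- initial state
  have hinit : ∃ p : ℕ × Set ℕ, Inv p ∧ p.1 = 0 := by
    obtain ⟨L', _, hL'inv⟩ := mkstate 0 {x | 0 < x}
      (Set.infinite_of_not_bddAbove (by
        intro ⟨B, hB⟩
        exact absurd (hB (show B + 1 ∈ {x | 0 < x} from Nat.succ_pos B)) (by omega)))
      (fun x hx => hx)
    exact ⟨(0, L'), hL'inv, rfl⟩
  obtain ⟨p₀, hp₀, _⟩ := hinit
  choose q hq1 hq2 hq3 using hstep
  let F : ℕ → {p : ℕ × Set ℕ // Inv p} :=
    fun r => Nat.rec ⟨p₀, hp₀⟩ (fun _ prev => ⟨q prev.1 prev.2, hq1 prev.1 prev.2⟩) r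
  set l : ℕ → ℕ := fun r => (F r).1.1 with hl
  set L : ℕ → Set ℕ := fun r => (F r).1.2 with hLdef
  have hFsucc : ∀ r, (F (r + 1)).1 = q (F r).1 (F r).2 := fun r => rfl
  have hmem : ∀ r, l (r + 1) ∈ L r := fun r => hq2 (F r).1 (F r).2
  have hLsub : ∀ r, L (r + 1) ⊆ L r := fun r => hq3 (F r).1 (F r).2
  have hgt : ∀ r, ∀ x ∈ L r, l r < x := fun r => (F r).2.2.1
  have hLinf : ∀ r, (L r).Infinite := fun r => (F r).2.1
  have hcred : ∀ r, (proj (m '' L r) (C (l r))).Countable := fun r => (F r).2.2.2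
  have hLchain : ∀ r r', r ≤ r' → L r' ⊆ L r := by
    intro r r' h
    induction r' with
    | zero => cases Nat.le_zero.mp h; exact subset_rfl
    | succ n ih =>
        rcases Nat.lt_or_ge r (n+1) with hlt | hge
        · exact (hLsub n).trans (ih (Nat.lt_succ_iff.mp hlt))
        · have : r = n + 1 := le_antisymm h hge
          subst this; exact subset_rfl
  have hlmono : StrictMono (fun r => l (r + 1)) := by
    have hstep' : ∀ r, l (r+1) < l (r+2) := by
      intro r
      exact hgt (r+1) (l (r+2)) (hmem (r+1))
    exact strictMono_nat_of_lt_succ hstep'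
  -- the diagonal set of coordinates
  set Mi : Set S := m '' (Set.range fun r => l (r + 1)) with hMi
  have hMiT : Mi ⊆ T := by rintro u ⟨x, _, rfl⟩; exact hmT x
  have hMiinf : Mi.Infinite := by
    apply Set.Infinite.image (Set.injOn_of_injective hminj)
    exact Set.infinite_range_of_injective hlmono.injective
  refine hbig.2 Mi hMiT hMiinf ?_
  -- countability of the projection of Z₀ on Mi
  have hsplit : proj Mi Z₀ ⊆ {fun _ => !b} ∪ ⋃ r, proj Mi (C (l (r + 1))) := by
    rintro y ⟨z, hz, rfl⟩
    by_cases hcase : ∃ r, z (m (l (r + 1))) = b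
    · obtain ⟨r, hr⟩ := hcase
      exact Or.inr (Set.mem_iUnion.mpr ⟨r, ⟨z, ⟨hz, hr⟩, rfl⟩⟩)
    · push_neg at hcase
      left
      have : (fun k : ↥Mi => z ↑k) = fun _ : ↥Mi => !b := by
        funext u
        obtain ⟨x, ⟨r, rfl⟩, hxu⟩ := u.2
        have hne := hcase r
        rw [← hxu]
        revert hne
        cases z (m (l (r + 1))) <;> cases b <;> simp
      simp [this]
  have hCcount : ∀ r, (proj Mi (C (l (r + 1)))).Countable := by
    intro r
    -- Mi ⊆ finite part ∪ m '' L (r+1)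
    have hsub2 : Mi ⊆ (m '' ((fun r' => l (r' + 1)) '' {r' | r' ≤ r})) ∪ (m '' L (r + 1)) := by
      rintro u ⟨x, ⟨r', rfl⟩, rfl⟩
      rcases le_or_gt r' r with hle | hlt
      · exact Or.inl ⟨l (r' + 1), ⟨r', hle, rfl⟩, rfl⟩
      · right
        refine ⟨l (r' + 1), ?_, rfl⟩
        have h1 : l (r' + 1) ∈ L r' := hmem r'
        exact hLchain (r+1) r' hlt h1
    have hfin : ((fun r' => l (r' + 1)) '' {r' | r' ≤ r}).Finite :=
      (Set.finite_le_nat r).image _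
    have h1 : (proj (m '' ((fun r' => l (r' + 1)) '' {r' | r' ≤ r})) (C (l (r+1)))).Countable := by
      have : Finite Bool := inferInstance
      exact proj_countable_of_finite _ (hfin.image m)
    have h2 := hcred (r + 1)
    exact proj_countable_mono hsub2 (proj_union_countable h1 h2)
  have : ({(fun _ => !b : ↥Mi → Bool)} ∪ ⋃ r, proj Mi (C (l (r + 1)))).Countable :=
    (Set.countable_singleton _).union (Set.countable_iUnion hCcount)
  exact Set.Countable.mono hsplit this

/-- Uniform splitting: a finite family of big sets can be simultaneously split
at a single fresh coordinate keeping all children big on a common reservoir. -/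
lemma uniformSplit {I : Type} [Finite I] (Zf : I → Set (S → Bool)) (T : Set S)
    (hT : T.Infinite) (hbig : ∀ i, BigOn T (Zf i)) :
    ∃ n ∈ T, ∃ T', T' ⊆ T \ {n} ∧ T'.Infinite ∧
      ∀ i b, BigOn T' {z ∈ Zf i | z n = b} := by
  classical
  by_contra hno
  push_neg at hno
  -- hno : ∀ n ∈ T, ∀ T', T' ⊆ T \ {n} → T'.Infinite → ∃ i b, ¬ BigOn T' {z ∈ Zf i | z n = b}
  letI : Fintype I := Fintype.ofFinite I
  -- one step of the diagonal: from an infinite Tp ⊆ T produce a coordinate and HS witness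
  have hstep : ∀ Tp : Set S, Tp ⊆ T → Tp.Infinite →
      ∃ (st : S × Set S × I × Bool),
        st.1 ∈ Tp ∧ st.2.1 ⊆ Tp \ {st.1} ∧ st.2.1.Infinite ∧
        HSOn st.2.1 {z ∈ Zf st.2.2.1 | z st.1 = st.2.2.2} := by
    intro Tp hTpT hTpinf
    obtain ⟨n, hn⟩ := hTpinf.nonempty
    have hTpd : (Tp \ {n}).Infinite := hTpinf.diff (Set.finite_singleton n)
    set lfam : List (Set (S → Bool)) :=
      (Finset.univ : Finset (I × Bool)).toList.map (fun p => {z ∈ Zf p.1 | z n = p.2}) with hlfam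
    obtain ⟨T', hT'1, hT'2, hT'3⟩ := refine_list lfam hTpd
    obtain ⟨i, b, hnb⟩ := hno n (hTpT hn) T' (hT'1.trans (by
      intro x hx; exact ⟨hTpT hx.1, hx.2⟩)) hT'2
    have hmem : {z ∈ Zf i | z n = b} ∈ lfam := by
      rw [hlfam]
      simp only [List.mem_map]
      exact ⟨(i, b), by simp, rfl⟩
    rcases hT'3 _ hmem with h | h
    · exact absurd h hnb
    · exact ⟨(n, T', i, b), hn, hT'1, hT'2, h⟩
  choose st hst1 hst2 hst3 hst4 using hstep
  -- build the diagonal sequence of states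
  let Fs : ℕ → {p : Set S // p ⊆ T ∧ p.Infinite} :=
    fun j => Nat.rec ⟨T, subset_rfl, hT⟩
      (fun _ prev =>
        ⟨(st prev.1 prev.2.1 prev.2.2).2.1,
          ((hst2 prev.1 prev.2.1 prev.2.2).trans (Set.diff_subset)).trans prev.2.1,
          hst3 prev.1 prev.2.1 prev.2.2⟩) j
  set Tj : ℕ → Set S := fun j => (Fs j).1 with hTj
  set mj : ℕ → S := fun j => (st (Fs j).1 (Fs j).2.1 (Fs j).2.2).1 with hmj
  set ij : ℕ → I := fun j => (st (Fs j).1 (Fs j).2.1 (Fs j).2.2).2.2.1 with hij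
  set bj : ℕ → Bool := fun j => (st (Fs j).1 (Fs j).2.1 (Fs j).2.2).2.2.2 with hbj
  have hTjsucc : ∀ j, Tj (j + 1) = (st (Fs j).1 (Fs j).2.1 (Fs j).2.2).2.1 := fun j => rfl
  have hmjmem : ∀ j, mj j ∈ Tj j := fun j => hst1 (Fs j).1 (Fs j).2.1 (Fs j).2.2
  have hTjsub : ∀ j, Tj (j + 1) ⊆ Tj j \ {mj j} := fun j => hst2 (Fs j).1 (Fs j).2.1 (Fs j).2.2
  have hHSj : ∀ j, HSOn (Tj (j + 1)) {z ∈ Zf (ij j) | z (mj j) = bj j} :=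
    fun j => hst4 (Fs j).1 (Fs j).2.1 (Fs j).2.2
  have hTjT : ∀ j, Tj j ⊆ T := fun j => (Fs j).2.1
  have hchain : ∀ j j', j ≤ j' → Tj j' ⊆ Tj j := by
    intro j j' h
    induction j' with
    | zero => cases Nat.le_zero.mp h; exact subset_rfl
    | succ k ih =>
        rcases lt_or_ge j (k+1) with hlt | hge
        · exact ((hTjsub k).trans Set.diff_subset).trans (ih (Nat.lt_succ_iff.mp hlt))
        · have : j = k + 1 := le_antisymm h hge
          subst this; exact subset_rfl
  have hmj_tail : ∀ j l, j < l → mj l ∈ Tj (j + 1) := by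
    intro j l hjl
    exact hchain (j+1) l hjl (hmjmem l)
  have hmjinj : Function.Injective mj := by
    have hne : ∀ j l, j < l → mj j ≠ mj l := by
      intro j l hjl heq
      have h1 : mj l ∈ Tj (j + 1) := hmj_tail j l hjl
      have h2 := (hTjsub j) h1
      exact h2.2 (by rw [← heq]; rfl)
    intro j l h
    rcases lt_trichotomy j l with hlt | he | hlt
    · exact absurd h (hne j l hlt)
    · exact he
    · exact absurd h.symm (hne l j hlt)
  -- pigeonhole on (i, b)
  obtain ⟨⟨istar, bstar⟩, hfib⟩ := Finite.exists_infinite_fiber (fun j => (ij j, bj j))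
  have hJinf : {j | (ij j, bj j) = (istar, bstar)}.Infinite := by
    rw [← Set.infinite_coe_iff]
    exact hfib
  set J : ℕ → ℕ := Nat.nth (fun j => (ij j, bj j) = (istar, bstar)) with hJ
  have hJmem : ∀ r, (ij (J r), bj (J r)) = (istar, bstar) :=
    fun r => Nat.nth_mem_of_infinite hJinf r
  have hJmono : StrictMono J := Nat.nth_strictMono hJinf
  -- apply smallDiag to Zf istar
  refine smallDiag (Zf istar) T (hbig istar) (fun r => mj (J r))
    (fun r r' h => hmjinj.eq_iff.mp h |> fun h2 => hJmono.injective h2)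
    (fun r => hTjT (J r) (hmjmem (J r)))
    (fun r => Tj (J r + 1))
    ?_ bstar ?_
  · intro r l hrl
    have : J r < J l := hJmono hrl
    exact hmj_tail (J r) (J l) this
  · intro r
    have h1 := hHSj (J r)
    have h2 := hJmem r
    have hi : ij (J r) = istar := (Prod.mk.injEq _ _ _ _).mp h2 |>.1
    have hb : bj (J r) = bstar := (Prod.mk.injEq _ _ _ _).mp h2 |>.2
    rw [hi, hb] at h1
    exact h1

section BinaryCT

variable (Z : Set (S → Bool))

/-- node of the independence tree -/
def node (f : ℕ → S) (k : ℕ) (σ : ℕ → Bool) : Set (S → Bool) :=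
  {z ∈ Z | ∀ j, j < k → z (f j) = σ j}

lemma node_congr {f : ℕ → S} {k : ℕ} {σ σ' : ℕ → Bool}
    (h : ∀ j, j < k → σ j = σ' j) : node Z f k σ = node Z f k σ' := by
  unfold node
  ext z
  exact ⟨fun ⟨h1, h2⟩ => ⟨h1, fun j hj => (h2 j hj).trans (h j hj)⟩,
    fun ⟨h1, h2⟩ => ⟨h1, fun j hj => (h2 j hj).trans (h j hj).symm⟩⟩

/-- invariant of the tree construction -/
def TreeInv (R : Set S) (k : ℕ) (p : (ℕ → S) × Set S) : Prop :=
  p.2 ⊆ R ∧ p.2.Infinite ∧ (∀ j, j < k → p.1 j ∉ p.2) ∧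
  (∀ j1 j2, j1 < j2 → j2 < k → p.1 j1 ≠ p.1 j2) ∧
  (∀ j, j < k → p.1 j ∈ R) ∧
  (∀ σ : ℕ → Bool, BigOn p.2 (node Z p.1 k σ))

lemma treeStep (R : Set S) (k : ℕ) (p : (ℕ → S) × Set S) (hp : TreeInv Z R k p) :
    ∃ n R', TreeInv Z R (k + 1) (Function.update p.1 k n, R') ∧ R' ⊆ p.2 := by
  classical
  obtain ⟨hsubR, hinf, hnotin, hinj, hinR, hnodes⟩ := hp
  set ext : (Fin k → Bool) → (ℕ → Bool) :=
    fun i => fun j => if h : j < k then i ⟨j, h⟩ else false with hext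
  obtain ⟨n, hnmem, T', hT'sub, hT'inf, hT'big⟩ :=
    uniformSplit (fun i : Fin k → Bool => node Z p.1 k (ext i)) p.2 hinf
      (fun i => hnodes (ext i))
  refine ⟨n, T', ⟨?_, hT'inf, ?_, ?_, ?_, ?_⟩, hT'sub.trans Set.diff_subset⟩
  · exact (hT'sub.trans Set.diff_subset).trans hsubR
  · intro j hj
    dsimp only
    rcases Nat.lt_succ_iff_lt_or_eq.mp hj with hjk | rfl
    · rw [Function.update_of_ne (Nat.ne_of_lt hjk)]
      intro hmem
      exact hnotin j hjk ((hT'sub.trans Set.diff_subset) hmem)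
    · rw [Function.update_self]
      intro hmem
      exact (hT'sub hmem).2 rfl
  · intro j1 j2 h12 h2k
    dsimp only
    rcases Nat.lt_succ_iff_lt_or_eq.mp h2k with hjk | rfl
    · rw [Function.update_of_ne (Nat.ne_of_lt (lt_trans h12 hjk)),
        Function.update_of_ne (Nat.ne_of_lt hjk)]
      exact hinj j1 j2 h12 hjk
    · rw [Function.update_of_ne (Nat.ne_of_lt h12), Function.update_self]
      intro heq
      exact hnotin j1 h12 (heq ▸ hnmem)
  · intro j hj
    dsimp only
    rcases Nat.lt_succ_iff_lt_or_eq.mp hj with hjk | rfl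
    · rw [Function.update_of_ne (Nat.ne_of_lt hjk)]; exact hinR j hjk
    · rw [Function.update_self]; exact hsubR hnmem
  · intro σ
    dsimp only
    have heq : node Z (Function.update p.1 k n) (k + 1) σ =
        {z ∈ node Z p.1 k (ext (fun j : Fin k => σ j)) | z n = σ k} := by
      unfold node
      ext z
      constructor
      · rintro ⟨hz, hall⟩
        refine ⟨⟨hz, ?_⟩, ?_⟩
        · intro j hj
          have := hall j (Nat.lt_succ_of_lt hj)
          rw [Function.update_of_ne (Nat.ne_of_lt hj)] at this
          rw [this, hext]
          simp [hj]
        · have := hall k (Nat.lt_succ_self k)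
          rwa [Function.update_self] at this
      · rintro ⟨⟨hz, hall⟩, hn⟩
        refine ⟨hz, ?_⟩
        intro j hj
        rcases Nat.lt_succ_iff_lt_or_eq.mp hj with hjk | rfl
        · rw [Function.update_of_ne (Nat.ne_of_lt hjk)]
          have := hall j hjk
          rw [this, hext]
          simp [hjk]
        · rwa [Function.update_self]
    rw [heq]
    exact hT'big (fun j : Fin k => σ j) (σ k)

lemma binaryCT (R : Set S) (hbig : BigOn R Z) :
    ∃ M, M ⊆ R ∧ M.Infinite ∧ ∀ P Q : Finset S, ↑P ⊆ M → ↑Q ⊆ M → Disjoint P Q →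
      ∃ z ∈ Z, (∀ u ∈ P, z u = false) ∧ (∀ u ∈ Q, z u = true) := by
  classical
  obtain ⟨c, hc⟩ := hbig.1.nonempty
  have hinit : TreeInv Z R 0 (fun _ => c, R) := by
    refine ⟨subset_rfl, hbig.1, by omega, by omega, by omega, ?_⟩
    intro σ
    have : node Z (fun _ => c) 0 σ = Z := by
      unfold node; ext z; simp
    rw [this]; exact hbig
  choose stepn stepR stepInv stepSub using treeStep Z R
  let Fs : (k : ℕ) → {p : (ℕ → S) × Set S // TreeInv Z R k p} :=
    fun k => Nat.rec ⟨(fun _ => c, R), hinit⟩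
      (fun k prev => ⟨(Function.update prev.1.1 k (stepn k prev.1 prev.2),
        stepR k prev.1 prev.2), stepInv k prev.1 prev.2⟩) k
  set fk : ℕ → (ℕ → S) := fun k => (Fs k).1.1 with hfk
  set Rk : ℕ → Set S := fun k => (Fs k).1.2 with hRk
  have hFsucc : ∀ k, fk (k + 1) = Function.update (fk k) k (stepn k (Fs k).1 (Fs k).2) :=
    fun k => rfl
  have hRsub : ∀ k, Rk (k + 1) ⊆ Rk k := fun k => stepSub k (Fs k).1 (Fs k).2
  have hInv : ∀ k, TreeInv Z R k (fk k, Rk k) := fun k => (Fs k).2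
  set N : ℕ → S := fun k => fk (k + 1) k with hN
  have hstable : ∀ k m, k < m → fk m k = N k := by
    intro k m hkm
    induction m with
    | zero => omega
    | succ mm ih =>
        rcases Nat.lt_succ_iff_lt_or_eq.mp hkm with hlt | rfl
        · rw [hFsucc mm, Function.update_of_ne (Nat.ne_of_lt hlt)]
          exact ih hlt
        · rfl
  have hNinj : Function.Injective N := by
    have hne : ∀ k m, k < m → N k ≠ N m := by
      intro k m hkm
      have h1 : fk (m + 1) k = N k := hstable k (m+1) (Nat.lt_succ_of_lt hkm)
      have h2 : fk (m + 1) m = N m := hstable m (m+1) (Nat.lt_succ_self m)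
      have h3 := (hInv (m + 1)).2.2.2.1 k m hkm (Nat.lt_succ_self m)
      dsimp only at h3
      rw [h1, h2] at h3
      exact h3
    intro k m h
    rcases lt_trichotomy k m with hlt | he | hlt
    · exact absurd h (hne k m hlt)
    · exact he
    · exact absurd h.symm (hne m k hlt)
  have hNR : ∀ k, N k ∈ R := by
    intro k
    have h3 := (hInv (k + 1)).2.2.2.2.1 k (Nat.lt_succ_self k)
    exact h3
  refine ⟨Set.range N, by rintro u ⟨k, rfl⟩; exact hNR k,
    Set.infinite_range_of_injective hNinj, ?_⟩
  intro P Q hP hQ hdisj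
  have hex : ∀ u ∈ P ∪ Q, ∃ k, N k = u := by
    intro u hu
    rcases Finset.mem_union.mp hu with h | h
    · exact hP h
    · exact hQ h
  choose idx hidx using hex
  set k₀ : ℕ := ((P ∪ Q).attach.sup fun u => idx u.1 u.2) + 1 with hk₀
  have hidxlt : ∀ u (hu : u ∈ P ∪ Q), idx u hu < k₀ := by
    intro u hu
    have h4 : idx u hu ≤ (P ∪ Q).attach.sup fun v => idx v.1 v.2 :=
      Finset.le_sup (f := fun v : {x // x ∈ P ∪ Q} => idx v.1 v.2) (Finset.mem_attach _ ⟨u, hu⟩)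
    omega
  set σ : ℕ → Bool := fun j => decide (N j ∈ Q) with hσ
  have hbignode := (hInv k₀).2.2.2.2.2 σ
  obtain ⟨z, hzZ, hzall⟩ := hbignode.nonempty
  refine ⟨z, hzZ, ?_, ?_⟩
  · intro u hu
    have huPQ : u ∈ P ∪ Q := Finset.mem_union_left _ hu
    have h1 := hzall (idx u huPQ) (hidxlt u huPQ)
    dsimp only at h1
    rw [hstable _ _ (hidxlt u huPQ), hidx u huPQ] at h1
    rw [h1, hσ]
    simp only [decide_eq_false_iff_not]
    rw [hidx u huPQ]
    exact Finset.disjoint_left.mp hdisj hu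
  · intro u hu
    have huPQ : u ∈ P ∪ Q := Finset.mem_union_right _ hu
    have h1 := hzall (idx u huPQ) (hidxlt u huPQ)
    dsimp only at h1
    rw [hstable _ _ (hidxlt u huPQ), hidx u huPQ] at h1
    rw [h1, hσ]
    simp only [decide_eq_true_eq]
    rw [hidx u huPQ]
    exact hu

end BinaryCT

section AlphaRed

variable {A : Type*} [Fintype A] [DecidableEq A]

/-- the boolean indicator shadow of `Z` at value `a` -/
def shadow (Z : Set (S → A)) (a : A) : Set (S → Bool) :=
  (fun (z : S → A) => fun s => decide (z s = a)) '' Z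

lemma alphaRed (Z : Set (S → A)) (R : Set S) (hbig : BigOn R Z) :
    ∃ a : A, ∃ R', R' ⊆ R ∧ R'.Infinite ∧ BigOn R' (shadow Z a) := by
  classical
  by_contra hno
  push_neg at hno
  have hHS : ∀ a : A, HSOn R (shadow Z a) := by
    intro a
    rcases dichotomy (shadow Z a) hbig.1 with h | ⟨R', h1, h2, h3⟩
    · exact h
    · exact absurd h3 (hno a R' h1 h2)
  -- fold to get a common M
  have hfold : ∀ l : List A, ∀ R₀, R₀ ⊆ R → R₀.Infinite →
      ∃ M, M ⊆ R₀ ∧ M.Infinite ∧ ∀ a ∈ l, (proj M (shadow Z a)).Countable := by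
    intro l
    induction l with
    | nil => exact fun R₀ h1 h2 => ⟨R₀, subset_rfl, h2, by simp⟩
    | cons a l ih =>
        intro R₀ h1 h2
        obtain ⟨M₁, g1, g2, g3⟩ := ih R₀ h1 h2
        obtain ⟨M, f1, f2, f3⟩ := hHS a M₁ (g1.trans h1) g2
        refine ⟨M, f1.trans g1, f2, ?_⟩
        intro b hb
        rcases List.mem_cons.mp hb with rfl | hb
        · exact f3
        · exact proj_countable_mono f1 (g3 b hb)
  obtain ⟨M, hM1, hM2, hM3⟩ := hfold (Finset.univ : Finset A).toList R subset_rfl hbig.1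
  have hall : ∀ a : A, (proj M (shadow Z a)).Countable := by
    intro a
    exact hM3 a (by simp)
  -- now proj M Z is countable
  refine hbig.2 M hM1 hM2 ?_
  set Ψ : (↥M → A) → (A → ↥M → Bool) := fun y a u => decide (y u = a) with hΨ
  have hinj : Function.Injective Ψ := by
    intro y y' he
    funext u
    have := congrFun (congrFun he (y u)) u
    simp only [hΨ, decide_eq_decide] at this
    exact (this.mp trivial).symm
  set Tset : Set (A → ↥M → Bool) := {h | ∀ a, h a ∈ proj M (shadow Z a)} with hTset
  have hsub : proj M Z ⊆ Ψ ⁻¹' Tset := by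
    rintro y ⟨z, hz, rfl⟩
    intro a
    exact ⟨fun s => decide (z s = a), ⟨z, hz, rfl⟩, rfl⟩
  have hTcount : Tset.Countable := by
    have : ∀ a, Countable ↥(proj M (shadow Z a)) := fun a => (hall a).to_subtype
    have hi : Function.Injective (fun (h : ↥Tset) => fun a => (⟨h.1 a, h.2 a⟩ :
        ↥(proj M (shadow Z a)))) := by
      intro h h' he
      apply Subtype.ext
      funext a
      have := congrFun he a
      exact congrArg Subtype.val this
    have : Countable ↥Tset := Function.Injective.countable hi
    exact Set.countable_coe_iff.mp this
  exact Set.Countable.mono hsub (hTcount.preimage hinj)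

/-- The combinatorial theorem: hereditary uncountability of projections yields
an independent set of coordinates. -/
lemma combThm (Z : Set (S → A)) (R : Set S) (hbig : BigOn R Z) :
    ∃ M, M ⊆ R ∧ M.Infinite ∧ ∃ a : A,
      ∀ P Q : Finset S, ↑P ⊆ M → ↑Q ⊆ M → Disjoint P Q →
        ∃ z ∈ Z, (∀ u ∈ P, z u ≠ a) ∧ (∀ u ∈ Q, z u = a) := by
  obtain ⟨a, R', hR'1, hR'2, hR'big⟩ := alphaRed Z R hbig
  obtain ⟨M, hM1, hM2, hMind⟩ := binaryCT (shadow Z a) R' hR'big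
  refine ⟨M, hM1.trans hR'1, hM2, a, ?_⟩
  intro P Q hP hQ hdisj
  obtain ⟨w, hw, hwP, hwQ⟩ := hMind P Q hP hQ hdisj
  obtain ⟨z, hz, rfl⟩ := hw
  refine ⟨z, hz, ?_, ?_⟩
  · intro u hu
    have := hwP u hu
    simpa using this
  · intro u hu
    have := hwQ u hu
    simpa using this

end AlphaRed

lemma not_countable_bool_funcs (α : Type*) [Infinite α] : ¬ Countable (α → Bool) := by
  classical
  intro h
  have e : Set α ≃ (α → Bool) :=
    ⟨fun s a => decide (a ∈ s), fun f => {a | f a = true},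
      fun s => by ext a; simp, fun f => by ext a; simp⟩
  have hc : Countable (Set α) := Countable.of_equiv _ e.symm
  obtain ⟨g, hg⟩ := Countable.exists_injective_nat (Set α)
  obtain ⟨e2⟩ : Nonempty (ℕ ↪ α) := ⟨Infinite.natEmbedding α⟩
  exact Function.cantor_injective (fun s => e2 (g s)) (e2.injective.comp hg)

section UnifCont

variable {A : Type*} [TopologicalSpace A] {X : Set (S → A)}

lemma uniform_continuity (hXc : IsCompact X) (f : ↥X → ℝ) (hf : Continuous f)
    {ε : ℝ} (hε : 0 < ε) :
    ∃ F : Finset S, ∀ x y : ↥X, (∀ t ∈ F, (x : S → A) t = (y : S → A) t) →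
      |f x - f y| < ε := by
  classical
  -- for each x, find a finite support basic neighbourhood controlling f within ε/2
  have hx : ∀ x : ↥X, ∃ (I : Finset S) (u : S → Set A),
      (∀ t ∈ I, IsOpen (u t) ∧ (x : S → A) t ∈ u t) ∧
      ∀ y : ↥X, (y : S → A) ∈ (↑I : Set S).pi u → |f y - f x| < ε / 2 := by
    intro x
    have hb : f ⁻¹' (Metric.ball (f x) (ε / 2)) ∈ nhds x :=
      hf.continuousAt.preimage_mem_nhds (Metric.ball_mem_nhds _ (by linarith))
    rw [mem_nhds_iff] at hb
    obtain ⟨V, hVsub, hVopen, hxV⟩ := hb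
    rw [isOpen_induced_iff] at hVopen
    obtain ⟨U, hUopen, rfl⟩ := hVopen
    rw [isOpen_pi_iff] at hUopen
    obtain ⟨I, u, hu, hpiU⟩ := hUopen _ hxV
    refine ⟨I, u, hu, ?_⟩
    intro y hy
    have : y ∈ Subtype.val ⁻¹' U := hpiU hy
    have := hVsub this
    rw [Set.mem_preimage, Metric.mem_ball, Real.dist_eq] at this
    exact this
  choose I u hu hctrl using hx
  -- the basic neighbourhoods cover the compact X
  set V : ↥X → Set ↥X := fun x => Subtype.val ⁻¹' ((↑(I x) : Set S).pi (u x)) with hV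
  have hVopen : ∀ x, IsOpen (V x) := by
    intro x
    apply IsOpen.preimage continuous_subtype_val
    exact isOpen_set_pi (Finset.finite_toSet _) (fun t ht => (hu x t ht).1)
  have hVmem : ∀ x, x ∈ V x := by
    intro x
    intro t ht
    exact (hu x t ht).2
  have hXcs : IsCompact (Set.univ : Set ↥X) := by
    have : CompactSpace ↥X := isCompact_iff_compactSpace.mp hXc
    exact isCompact_univ
  obtain ⟨s, hs⟩ := hXcs.elim_finite_subcover V hVopen (fun x _ => Set.mem_iUnion.mpr ⟨x, hVmem x⟩)
  refine ⟨s.sup I, ?_⟩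
  intro x y hagree
  have hcov := hs (Set.mem_univ x)
  rw [Set.mem_iUnion₂] at hcov
  obtain ⟨x₀, hx₀s, hxV₀⟩ := hcov
  have hyV₀ : y ∈ V x₀ := by
    intro t ht
    have htF : t ∈ s.sup I := Finset.le_sup (f := I) hx₀s (by exact ht)
    rw [← hagree t htF]
    exact hxV₀ t ht
  have h1 := hctrl x₀ x hxV₀
  have h2 := hctrl x₀ y hyV₀
  calc |f x - f y| ≤ |f x - f x₀| + |f x₀ - f y| := abs_sub_le _ _ _
    _ < ε / 2 + ε / 2 := by
        rw [abs_sub_comm (f x₀) (f y)]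
        exact add_lt_add h1 h2
    _ = ε := by ring

end UnifCont

lemma proj_empty_countable {Z : Set (S → β)} [Finite β] :
    (proj (∅ : Set S) Z).Countable :=
  proj_countable_of_finite Z (Set.finite_empty)

lemma proj_finset_biUnion_countable [Finite β] (F : Finset S) (K : S → Set S)
    (Z : Set (S → β)) (h : ∀ t ∈ F, (proj (K t) Z).Countable) :
    (proj (⋃ t ∈ F, K t) Z).Countable := by
  classical
  induction F using Finset.induction with
  | empty =>
      rw [show (⋃ t ∈ (∅ : Finset S), K t) = (∅ : Set S) by simp]
      exact proj_empty_countable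
  | @insert t F htF ih =>
      have he : (⋃ u ∈ insert t F, K u) = K t ∪ ⋃ u ∈ F, K u := by
        simp [Set.biUnion_insert]
      rw [he]
      exact proj_union_countable (h t (Finset.mem_insert_self t F))
        (ih fun u hu => h u (Finset.mem_insert_of_mem hu))

end Stmt5Aux

namespace Stmt5Aux

lemma dirB {S : Type*} [Monoid S] {d : ℕ} {X : Set (S → Fin (d + 1))}
    (hXclosed : IsClosed X)
    (hXinv : ∀ s : S, ∀ ω ∈ X, (fun t => ω (t * s)) ∈ X)
    (h2 : ∀ L : Set S, L.Infinite → ∃ K ⊆ L, K.Infinite ∧ (proj K X).Countable) :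
    ∀ f : X → ℝ, Continuous f →
      ¬ ∃ s : ℕ → S, IsIndependentSeq fun n (x : X) =>
          f ⟨fun t => (x : S → Fin (d + 1)) (t * s n), hXinv (s n) x x.2⟩ := by
  classical
  intro f hf hex
  obtain ⟨s, a, b, hab, hInd⟩ := hex
  set g : ℕ → ↥X → ℝ := fun n (x : ↥X) =>
    f ⟨fun t => (x : S → Fin (d + 1)) (t * s n), hXinv (s n) x x.2⟩ with hg
  have hXc : IsCompact X := hXclosed.isCompact
  obtain ⟨F, hF⟩ := uniform_continuity hXc f hf (sub_pos.mpr hab)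
  -- refine an infinite set of indices with countable projections on each orbit piece
  have hrefine : ∀ F' : Finset S, ∃ N : Set ℕ, N.Infinite ∧
      ∀ t ∈ F', (proj {u | ∃ n ∈ N, u = t * s n} X).Countable := by
    intro F'
    induction F' using Finset.induction with
    | empty => exact ⟨Set.univ, Set.infinite_univ, by simp⟩
    | @insert t F' htF ih =>
        obtain ⟨N, hNinf, hNct⟩ := ih
        by_cases hfin : {u | ∃ n ∈ N, u = t * s n}.Finite
        · refine ⟨N, hNinf, ?_⟩
          intro t' ht'
          rcases Finset.mem_insert.mp ht' with rfl | ht'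
          · exact proj_countable_of_finite X hfin
          · exact hNct t' ht'
        · have hLinf : {u | ∃ n ∈ N, u = t * s n}.Infinite := hfin
          obtain ⟨K, hKL, hKinf, hKct⟩ := h2 _ hLinf
          have hpick : ∀ u : ↥K, ∃ n, n ∈ N ∧ (u : S) = t * s n := fun u => hKL u.2
          choose ι hι1 hι2 using hpick
          have hιinj : Function.Injective ι := by
            intro u v huv
            apply Subtype.ext
            rw [hι2 u, hι2 v, huv]
          have : Infinite ↥K := hKinf.to_subtype
          refine ⟨Set.range ι, Set.infinite_range_of_injective hιinj, ?_⟩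
          intro t' ht'
          rcases Finset.mem_insert.mp ht' with rfl | ht'
          · refine proj_countable_mono ?_ hKct
            rintro u ⟨n, ⟨v, rfl⟩, rfl⟩
            rw [← hι2 v]
            exact v.2
          · refine proj_countable_mono ?_ (hNct t' ht')
            rintro u ⟨n, ⟨v, rfl⟩, rfl⟩
            exact ⟨ι v, hι1 v, rfl⟩
  obtain ⟨N, hNinf, hNct⟩ := hrefine F
  set G : Set S := ⋃ t ∈ F, {u | ∃ n ∈ N, u = t * s n} with hG
  have hGct : (proj G X).Countable :=
    proj_finset_biUnion_countable F _ X (fun t ht => hNct t ht)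
  -- for each boolean pattern choose a witness by compactness
  have hwit : ∀ σ : ℕ → Bool, ∃ x : ↥X, ∀ n, n ∈ N →
      (if σ n then b ≤ g n x else g n x ≤ a) := by
    intro σ
    have : CompactSpace ↥X := isCompact_iff_compactSpace.mp hXc
    set tset : ↥N → Set ↥X := fun i =>
      {x : ↥X | if σ i.1 then b ≤ g i.1 x else g i.1 x ≤ a} with htset
    have hclosed : ∀ i, IsClosed (tset i) := by
      intro i
      have hgc : Continuous (g i.1) := by
        apply hf.comp
        apply Continuous.subtype_mk
        exact continuous_pi fun t => (continuous_apply (t * s i.1)).comp continuous_subtype_val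
      by_cases hσ : σ i.1
      · simp only [htset, hσ, if_true]
        exact isClosed_le continuous_const hgc
      · simp only [htset, hσ, if_false]
        exact isClosed_le hgc continuous_const
    by_contra hno
    push_neg at hno
    have hempty : (Set.univ : Set ↥X) ∩ ⋂ i, tset i = ∅ := by
      rw [Set.eq_empty_iff_forall_notMem]
      rintro x ⟨_, hx⟩
      rw [Set.mem_iInter] at hx
      obtain ⟨n, hnN, hn⟩ := hno x
      exact hn (hx ⟨n, hnN⟩)
    obtain ⟨u, hu⟩ := isCompact_univ.elim_finite_subfamily_closed tset hclosed hempty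
    set P : Finset ℕ := (u.image fun i => (i : ↥N).1).filter (fun n => σ n = false) with hP
    set M : Finset ℕ := (u.image fun i => (i : ↥N).1).filter (fun n => σ n = true) with hM
    have hdisj : Disjoint P M := by
      rw [Finset.disjoint_left]
      intro n hn hn'
      have h1 := (Finset.mem_filter.mp hn).2
      have h2 := (Finset.mem_filter.mp hn').2
      rw [h1] at h2
      exact Bool.false_ne_true h2
    obtain ⟨y, hyP, hyM⟩ := hInd P M hdisj
    rw [Set.eq_empty_iff_forall_notMem] at hu
    refine hu y ⟨Set.mem_univ y, ?_⟩
    rw [Set.mem_iInter₂]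
    intro i hi
    by_cases hσ : σ i.1
    · simp only [htset, hσ, if_true, Set.mem_setOf_eq]
      have hiM : i.1 ∈ M := by
        rw [hM, Finset.mem_filter]
        exact ⟨Finset.mem_image.mpr ⟨i, hi, rfl⟩, by rw [hσ]⟩
      have := Set.mem_iInter₂.mp hyM i.1 hiM
      exact le_of_lt this
    · simp only [htset, hσ, if_false, Set.mem_setOf_eq]
      have hiP : i.1 ∈ P := by
        rw [hP, Finset.mem_filter]
        refine ⟨Finset.mem_image.mpr ⟨i, hi, rfl⟩, ?_⟩
        simp [hσ]
      have := Set.mem_iInter₂.mp hyP i.1 hiP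
      exact le_of_lt this
  -- build the injection from boolean sequences into the countable projection
  set ext : (↥N → Bool) → (ℕ → Bool) := fun σ' n => if h : n ∈ N then σ' ⟨n, h⟩ else false
    with hext
  choose xw hxw using hwit
  set Φ : (↥N → Bool) → (↥G → Fin (d + 1)) := fun σ' => fun k : ↥G => (xw (ext σ') : S → Fin (d + 1)) k with hΦ
  have hΦmem : ∀ σ', Φ σ' ∈ proj G X := fun σ' => ⟨(xw (ext σ')).1, (xw (ext σ')).2, rfl⟩
  have hΦinj : Function.Injective Φ := by
    intro σ' τ' he
    by_contra hne
    have : ∃ i, σ' i ≠ τ' i := by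
      by_contra hc
      push_neg at hc
      exact hne (funext hc)
    obtain ⟨i, hi⟩ := this
    have h1 := hxw (ext σ') i.1 i.2
    have h2 := hxw (ext τ') i.1 i.2
    have hσeq : ext σ' i.1 = σ' i := by simp [hext, i.2]
    have hτeq : ext τ' i.1 = τ' i := by simp [hext, i.2]
    rw [hσeq] at h1
    rw [hτeq] at h2
    -- the two witnesses agree on F shifted by s i.1
    have hagree : ∀ t ∈ F, (xw (ext σ') : S → Fin (d + 1)) (t * s i.1) = (xw (ext τ') : S → Fin (d + 1)) (t * s i.1) := by
      intro t ht
      have hmem : t * s i.1 ∈ G := by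
        rw [hG]
        refine Set.mem_biUnion ht ⟨i.1, i.2, rfl⟩
      exact congrFun he ⟨t * s i.1, hmem⟩
    have hlt := hF ⟨fun t => (xw (ext σ') : S → Fin (d + 1)) (t * s i.1), hXinv _ _ (xw (ext σ')).2⟩
      ⟨fun t => (xw (ext τ') : S → Fin (d + 1)) (t * s i.1), hXinv _ _ (xw (ext τ')).2⟩
      (fun t ht => hagree t ht)
    rw [abs_lt] at hlt
    -- hlt relates g i.1 of the two witnesses
    have hgσ : f ⟨fun t => (xw (ext σ') : S → Fin (d + 1)) (t * s i.1), hXinv _ _ (xw (ext σ')).2⟩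
        = g i.1 (xw (ext σ')) := rfl
    have hgτ : f ⟨fun t => (xw (ext τ') : S → Fin (d + 1)) (t * s i.1), hXinv _ _ (xw (ext τ')).2⟩
        = g i.1 (xw (ext τ')) := rfl
    rw [hgσ, hgτ] at hlt
    cases hσ : σ' i with
    | false =>
        have hτ : τ' i = true := by
          cases hτ' : τ' i
          · rw [hσ, hτ'] at hi; exact absurd rfl hi
          · rfl
        rw [hσ] at h1
        rw [hτ] at h2
        simp only [Bool.false_eq_true, if_false, if_true] at h1 h2
        linarith [hlt.1, hlt.2]
    | true =>
        have hτ : τ' i = false := by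
          cases hτ' : τ' i
          · rfl
          · rw [hσ, hτ'] at hi; exact absurd rfl hi
        rw [hσ] at h1
        rw [hτ] at h2
        simp only [Bool.false_eq_true, if_false, if_true] at h1 h2
        linarith [hlt.1, hlt.2]
  have : Infinite ↥N := hNinf.to_subtype
  have hcnt : Countable ↥(proj G X) := hGct.to_subtype
  have : Countable (↥N → Bool) := by
    have hinj2 : Function.Injective (fun σ' => (⟨Φ σ', hΦmem σ'⟩ : ↥(proj G X))) := by
      intro σ' τ' he
      exact hΦinj (congrArg Subtype.val he)
    exact Function.Injective.countable hinj2
  exact not_countable_bool_funcs ↥N this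

end Stmt5Aux

theorem stmt5 {S : Type*} [Monoid S] (d : ℕ) (X : Set (S → Fin (d + 1)))
    (hXclosed : IsClosed X)
    (hXinv : ∀ s : S, ∀ ω ∈ X, (fun t => ω (t * s)) ∈ X) :
    -- (1) the subshift `(S, X)` is tame
    (∀ f : X → ℝ, Continuous f →
      ¬ ∃ s : ℕ → S, IsIndependentSeq fun n (x : X) =>
          f ⟨fun t => (x : S → Fin (d + 1)) (t * s n), hXinv (s n) x x.2⟩) ↔
    -- (2) for every infinite `L ⊆ S` there is an infinite `K ⊆ L` with `π_K(X)` countable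
    (∀ L : Set S, L.Infinite → ∃ K ⊆ L, K.Infinite ∧
      Set.Countable ((fun (ω : S → Fin (d + 1)) => fun k : K => ω k) '' X)) := by
  classical
  constructor
  · intro h1 L hL
    by_contra hno
    push_neg at hno
    have hbig : Stmt5Aux.BigOn L X := by
      refine ⟨hL, ?_⟩
      intro M hM hMinf hc
      exact hno M hM hMinf hc
    obtain ⟨M, hML, hMinf, astar, hind⟩ := Stmt5Aux.combThm X L hbig
    set e : ℕ ↪ ↥M := hMinf.natEmbedding with he
    set s : ℕ → S := fun n => (e n : S) with hs
    have hsinj : Function.Injective s := fun n m h => e.injective (Subtype.ext h)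
    have hsM : ∀ n, s n ∈ M := fun n => (e n).2
    set f : ↥X → ℝ := fun x => if (x : S → Fin (d + 1)) 1 = astar then (1 : ℝ) else 0 with hfdef
    have hf : Continuous f := by
      have h1c : Continuous fun x : ↥X => ((x : S → Fin (d + 1)) 1) :=
        (continuous_apply 1).comp continuous_subtype_val
      have h2c : Continuous fun v : Fin (d + 1) => if v = astar then (1 : ℝ) else 0 :=
        continuous_of_discreteTopology
      exact h2c.comp h1c
    refine h1 f hf ⟨s, 1/3, 2/3, by norm_num, ?_⟩
    intro P M' hdisj
    set P' : Finset S := P.image s with hP'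
    set Q' : Finset S := M'.image s with hQ'
    have hP'M : ↑P' ⊆ M := by
      intro u hu
      obtain ⟨n, _, rfl⟩ := Finset.mem_image.mp hu
      exact hsM n
    have hQ'M : ↑Q' ⊆ M := by
      intro u hu
      obtain ⟨n, _, rfl⟩ := Finset.mem_image.mp hu
      exact hsM n
    have hdisj' : Disjoint P' Q' := by
      rw [Finset.disjoint_left]
      intro u huP huQ
      obtain ⟨n, hn, rfl⟩ := Finset.mem_image.mp huP
      obtain ⟨m, hm, hnm⟩ := Finset.mem_image.mp huQ
      have : m = n := hsinj hnm
      subst this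
      exact Finset.disjoint_left.mp hdisj hn hm
    obtain ⟨z, hz, hzP, hzQ⟩ := hind P' Q' hP'M hQ'M hdisj'
    refine ⟨⟨z, hz⟩, ?_, ?_⟩
    · rw [Set.mem_iInter₂]
      intro n hn
      have hmem : s n ∈ P' := Finset.mem_image.mpr ⟨n, hn, rfl⟩
      have hne := hzP (s n) hmem
      show (if (fun t => z (t * s n)) 1 = astar then (1:ℝ) else 0) < 1/3
      simp only [one_mul]
      rw [if_neg hne]
      norm_num
    · rw [Set.mem_iInter₂]
      intro n hn
      have hmem : s n ∈ Q' := Finset.mem_image.mpr ⟨n, hn, rfl⟩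
      have heq := hzQ (s n) hmem
      show (2:ℝ)/3 < if (fun t => z (t * s n)) 1 = astar then (1:ℝ) else 0
      simp only [one_mul]
      rw [if_pos heq]
      norm_num
  · intro h2
    exact Stmt5Aux.dirB hXclosed hXinv h2
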